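/- Let k > 1 and suppose Λ = 2, so the recurrence is a_n = a_{n-1} + a_{n-k} with a_i = 1 for i ≤ 0. Then the a-Zeckendorf representation system is a place value system with place values a_0, a_1, a_2, …: for every positive integer N, if d_M,…,d_0 is the a-Zeckendorf representation of N, then N = Σ_{i=0}^{M} d_i a_i, where each d_i ∈ {0,1} and any two 1-digits are separated by at least k−1 zeroes. -/

import Mathlib

/-- `Λ_j = λ₁ + ⋯ + λ_j`. -/
def Lam (lam : ℕ → ℕ) (j : ℕ) : ℕ := ∑ i ∈ Finset.Icc 1 j, lam i

/-- `μ_ℓ` is the minimum index `j` with `Λ_j > ℓ`. -/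
noncomputable def mu (lam : ℕ → ℕ) (ℓ : ℕ) : ℕ := sInf {j : ℕ | ℓ < Lam lam j}

/-- An `a`-valid digit sequence, as a list `[d_0, d_1, …, d_M]`
(least significant digit first). -/
def AValid (lam : ℕ → ℕ) (k : ℕ) (l : List ℕ) : Prop :=
  l ≠ [] ∧ (∀ x ∈ l, x < Lam lam k) ∧ l.getLast? ≠ some 0 ∧
  ∀ i j : ℕ, i < j → j < i + mu lam (l.getD i 0) → j < l.length → l.getD j 0 = 0

/-- Length-then-lexicographic order on digit sequences. -/
def ZOrd (l₁ l₂ : List ℕ) : Prop :=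
  l₁.length < l₂.length ∨
    (l₁.length = l₂.length ∧ List.Lex (· < ·) l₁.reverse l₂.reverse)

namespace S15

section
variable {k : ℕ} {a : ℤ → ℤ}

/-- value of a digit sequence -/
def sval (a : ℤ → ℤ) (l : List ℕ) : ℤ :=
  ∑ i ∈ Finset.range l.length, (l.getD i 0 : ℤ) * a i

def Sep (k : ℕ) (l : List ℕ) : Prop :=
  ∀ i j : ℕ, i < j → l.getD i 0 = 1 → l.getD j 0 = 1 → i + k ≤ j

def Good (k : ℕ) (l : List ℕ) : Prop :=
  l ≠ [] ∧ (∀ x ∈ l, x ≤ 1) ∧ l.getLast? ≠ some 0 ∧ Sep k l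

variable (hk : 1 < k) (ha0 : ∀ i : ℤ, i ≤ 0 → a i = 1)
  (harec : ∀ n : ℤ, 1 ≤ n → a n = a (n - 1) + a (n - k))

include hk ha0 harec

lemma a_pos : ∀ i : ℤ, 1 ≤ a i := by
  have key : ∀ n : ℕ, ∀ i : ℤ, i ≤ n → 1 ≤ a i := by
    intro n
    induction n with
    | zero => intro i hi; rw [ha0 i (by exact_mod_cast hi)]
    | succ n ih =>
      intro i hi
      by_cases h : i ≤ n
      · exact ih i h
      · have h1 : (1:ℤ) ≤ i := by push_cast at hi ⊢; omega
        rw [harec i h1]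
        have e1 := ih (i-1) (by push_cast at hi ⊢; omega)
        have e2 := ih (i-k) (by push_cast at hi ⊢; omega)
        linarith
  intro i
  rcases le_or_gt i 0 with h | h
  · rw [ha0 i h]
  · exact key i.toNat i (by simp)

lemma a_step : ∀ i : ℤ, 0 ≤ i → a i + 1 ≤ a (i + 1) := by
  intro i hi
  rw [harec (i+1) (by omega)]
  have := a_pos hk ha0 harec (i + 1 - k)
  simp only [add_sub_cancel_right]
  linarith

lemma a_mono : ∀ i j : ℤ, 0 ≤ i → i ≤ j → a i ≤ a j := by
  intro i j hi hij
  have key : ∀ n : ℕ, ∀ j : ℤ, 0 ≤ i → i ≤ j → j ≤ i + n → a i ≤ a j := by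
    intro n
    induction n with
    | zero => intro j h0 h1 h2; have : i = j := by omega
              rw [this]
    | succ n ih =>
      intro j h0 h1 h2
      by_cases h : j ≤ i + n
      · exact ih j h0 h1 h
      · have hj : j = i + n + 1 := by push_cast at h2 ⊢; omega
        have h3 := a_step hk ha0 harec (i + n) (by positivity)
        have h4 := ih (i + n) h0 (by omega) (by omega)
        rw [hj]; linarith
  exact key (j - i).toNat j hi hij (by omega)

lemma a_smono : ∀ i j : ℤ, 0 ≤ i → i < j → a i < a j := by
  intro i j hi hij
  have := a_step hk ha0 harec i hi
  have := a_mono hk ha0 harec (i+1) j (by omega) (by omega)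
  omega

lemma a_unbounded : ∀ m : ℕ, (m : ℤ) + 1 ≤ a m := by
  intro m
  induction m with
  | zero => push_cast; rw [ha0 0 le_rfl]
  | succ n ih =>
    have := a_step hk ha0 harec n (by positivity)
    push_cast
    push_cast at ih
    linarith

lemma sum_le (l : List ℕ) (hd : ∀ i, l.getD i 0 ≤ 1) (hs : Sep k l) :
    ∀ m : ℕ, ∑ i ∈ Finset.range m, (l.getD i 0 : ℤ) * a i ≤ a m - 1 := by
  intro m
  induction m using Nat.strong_induction_on with
  | _ m ih =>
    match m with
    | 0 => simp [ha0 0 le_rfl]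
    | (m+1) =>
      rw [Finset.sum_range_succ]
      have hr := harec ((m:ℤ)+1) (by push_cast; omega)
      have he : (m:ℤ) + 1 - 1 = (m:ℤ) := by ring
      rw [he] at hr
      rcases Nat.lt_or_ge (l.getD m 0) 1 with h | h
      · have h0 : l.getD m 0 = 0 := by omega
        rw [h0]
        have h2 := ih m (by omega)
        have h3 := a_pos hk ha0 harec ((m:ℤ) + 1 - k)
        push_cast at *
        linarith
      · have h1 : l.getD m 0 = 1 := le_antisymm (hd m) h
        rw [h1]
        have hzero : ∀ i, m + 1 - k ≤ i → i < m → l.getD i 0 = 0 := by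
          intro i h2 h3
          by_contra hne
          have h4 : l.getD i 0 = 1 := by have := hd i; omega
          have := hs i m h3 h4 h1
          omega
        have hsplit : ∑ i ∈ Finset.range m, (l.getD i 0 : ℤ) * a i
            = ∑ i ∈ Finset.range (m + 1 - k), (l.getD i 0 : ℤ) * a i := by
          have hcons := Finset.sum_Ico_consecutive (fun i => ((l.getD i 0 : ℤ)) * a i)
            (Nat.zero_le (m+1-k)) (show m+1-k ≤ m by omega)
          simp only [← Finset.range_eq_Ico] at hcons
          have hz : ∑ i ∈ Finset.Ico (m+1-k) m, (l.getD i 0 : ℤ) * a i = 0 := by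
            apply Finset.sum_eq_zero
            intro i hi
            rw [Finset.mem_Ico] at hi
            rw [hzero i hi.1 hi.2]
            simp
          rw [hz] at hcons
          simpa using hcons.symm
        rw [hsplit]
        have hbound : ∑ i ∈ Finset.range (m + 1 - k), (l.getD i 0 : ℤ) * a i
            ≤ a ((m:ℤ) + 1 - k) - 1 := by
          rcases Nat.lt_or_ge m k with hmk | hmk
          · have h0 : m + 1 - k = 0 := by omega
            rw [h0, ha0 ((m:ℤ)+1-k) (by push_cast; omega)]
            simp
          · have h0 : ((m + 1 - k : ℕ) : ℤ) = (m:ℤ) + 1 - k := by push_cast; omega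
            have h5 := ih (m + 1 - k) (by omega)
            rw [h0] at h5
            exact h5
        push_cast at *
        linarith

lemma sum_ge (l : List ℕ) (m : ℕ) (h1 : l.getD m 0 = 1) :
    ∀ n, m < n → a m ≤ ∑ i ∈ Finset.range n, (l.getD i 0 : ℤ) * a i := by
  intro n hn
  have := Finset.single_le_sum (f := fun i => (l.getD i 0 : ℤ) * a i)
    (fun i _ => mul_nonneg (by positivity)
      (le_trans zero_le_one (a_pos hk ha0 harec i))) (Finset.mem_range.2 hn)
  simp only [h1] at this
  simpa using this

omit hk ha0 harec in
lemma good_top {l : List ℕ} (h : Good k l) : l.getD (l.length - 1) 0 = 1 := by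
  obtain ⟨hne, hle, hlast, _⟩ := h
  have hlen : 0 < l.length := List.length_pos_iff.2 hne
  rw [List.getD_eq_getElem l 0 (by omega)]
  have hg : l.getLast? = some (l.getLast hne) := List.getLast?_eq_getLast hne
  rw [List.getLast_eq_getElem] at hg
  have hmem : l[l.length - 1] ∈ l := List.getElem_mem _
  have := hle _ hmem
  rw [hg] at hlast
  simp only [ne_eq, Option.some.injEq] at hlast
  omega

lemma sval_ge {l : List ℕ} (h : Good k l) : a ((l.length : ℤ) - 1) ≤ sval a l := by
  have hlen : 0 < l.length := List.length_pos_iff.2 h.1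
  have := sum_ge hk ha0 harec l (l.length - 1) (good_top h) l.length (by omega)
  have hc : ((l.length - 1 : ℕ) : ℤ) = (l.length : ℤ) - 1 := by push_cast; omega
  rw [hc] at this
  exact this

lemma sval_pos {l : List ℕ} (h : Good k l) : 1 ≤ sval a l :=
  le_trans (a_pos hk ha0 harec _) (sval_ge hk ha0 harec h)

lemma sval_le {l : List ℕ} (hd : ∀ x ∈ l, x ≤ 1) (hs : Sep k l) :
    sval a l ≤ a (l.length : ℤ) - 1 := by
  apply sum_le hk ha0 harec l _ hs
  intro i
  rcases Nat.lt_or_ge i l.length with h | h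
  · rw [List.getD_eq_getElem l 0 h]; exact hd _ (List.getElem_mem _)
  · rw [List.getD_eq_default l 0 h]; omega


omit hk ha0 harec in
lemma getD_le {l : List ℕ} (hd : ∀ x ∈ l, x ≤ 1) (i : ℕ) : l.getD i 0 ≤ 1 := by
  rcases Nat.lt_or_ge i l.length with h | h
  · rw [List.getD_eq_getElem l 0 h]; exact hd _ (List.getElem_mem _)
  · rw [List.getD_eq_default l 0 h]; omega

omit hk ha0 harec in
lemma lex_exists' {l₁ l₂ : List ℕ} (h : List.Lex (· < ·) l₁ l₂)
    (hlen : l₁.length = l₂.length) :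
    ∃ i, i < l₁.length ∧ (∀ j, j < i → l₁.getD j 0 = l₂.getD j 0) ∧
      l₁.getD i 0 < l₂.getD i 0 := by
  induction h with
  | nil => simp at hlen
  | @rel a l₁ b l₂ h =>
    exact ⟨0, by simp, fun j hj => by omega, by simpa using h⟩
  | @cons a l₁ l₂ h ih =>
    obtain ⟨i, hi, he, hlt⟩ := ih (by simpa using hlen)
    refine ⟨i + 1, by simpa using hi, fun j hj => ?_, by simpa using hlt⟩
    cases j with
    | zero => simp
    | succ j => simp only [List.getD_cons_succ]; exact he j (by omega)

omit hk ha0 harec in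
lemma rev_getD {l : List ℕ} {j : ℕ} (hj : j < l.length) :
    l.reverse.getD j 0 = l.getD (l.length - 1 - j) 0 := by
  rw [List.getD_eq_getElem l.reverse 0 (by simpa using hj),
    List.getD_eq_getElem l 0 (by omega)]
  exact List.getElem_reverse _

omit hk ha0 harec in
lemma zord_tri (l₁ l₂ : List ℕ) : ZOrd l₁ l₂ ∨ l₁ = l₂ ∨ ZOrd l₂ l₁ := by
  rcases lt_trichotomy l₁.length l₂.length with h | h | h
  · exact Or.inl (Or.inl h)
  · rcases @trichotomous _ (List.Lex ((· < ·) : ℕ → ℕ → Prop)) _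
      l₁.reverse l₂.reverse with hl | hl | hl
    · exact Or.inl (Or.inr ⟨h, hl⟩)
    · exact Or.inr (Or.inl (List.reverse_injective hl))
    · exact Or.inr (Or.inr (Or.inr ⟨h.symm, hl⟩))
  · exact Or.inr (Or.inr (Or.inl h))

lemma sval_lt {l₁ l₂ : List ℕ} (h₁ : Good k l₁) (h₂ : Good k l₂) (h : ZOrd l₁ l₂) :
    sval a l₁ < sval a l₂ := by
  rcases h with hlen | ⟨hlen, hlex⟩
  · have b1 := sval_le hk ha0 harec h₁.2.1 h₁.2.2.2
    have b2 := sval_ge hk ha0 harec h₂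
    have hm : a (l₁.length : ℤ) ≤ a ((l₂.length : ℤ) - 1) :=
      a_mono hk ha0 harec _ _ (by positivity) (by push_cast; omega)
    linarith
  · obtain ⟨i, hi, he, hlt⟩ := lex_exists' hlex (by simp [hlen])
    simp only [List.length_reverse] at hi
    have hr1 : l₁.reverse.getD i 0 = l₁.getD (l₁.length - 1 - i) 0 := rev_getD hi
    have hr2 : l₂.reverse.getD i 0 = l₂.getD (l₂.length - 1 - i) 0 :=
      rev_getD (by omega)
    have hp2 : l₂.length - 1 - i = l₁.length - 1 - i := by omega
    rw [hr1, hr2, hp2] at hlt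
    set n := l₁.length with hn
    set p := n - 1 - i with hp
    have hpn : p < n := by omega
    have hb2 : l₂.getD p 0 ≤ 1 := getD_le h₂.2.1 p
    have hd1p : l₁.getD p 0 = 0 := by omega
    have hd2p : l₂.getD p 0 = 1 := by omega
    have heq : ∀ q, p < q → q < n → l₁.getD q 0 = l₂.getD q 0 := by
      intro q hq1 hq2
      have hj : n - 1 - q < i := by omega
      have h5 := he (n - 1 - q) hj
      rw [rev_getD (by omega : n - 1 - q < l₁.length),
        rev_getD (by omega : n - 1 - q < l₂.length)] at h5
      have e1 : l₁.length - 1 - (n - 1 - q) = q := by omega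
      have e2 : l₂.length - 1 - (n - 1 - q) = q := by omega
      rw [e1, e2] at h5
      exact h5
    -- split both sums at p+1
    have split : ∀ l : List ℕ, ∑ j ∈ Finset.range n, (l.getD j 0 : ℤ) * a j
        = ∑ j ∈ Finset.range (p+1), (l.getD j 0 : ℤ) * a j
          + ∑ j ∈ Finset.Ico (p+1) n, (l.getD j 0 : ℤ) * a j := by
      intro l
      have hcons := Finset.sum_Ico_consecutive (fun j => ((l.getD j 0 : ℤ)) * a j)
        (Nat.zero_le (p+1)) (show p+1 ≤ n by omega)
      simp only [← Finset.range_eq_Ico] at hcons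
      exact hcons.symm
    have hupper : ∑ j ∈ Finset.Ico (p+1) n, (l₁.getD j 0 : ℤ) * a j
        = ∑ j ∈ Finset.Ico (p+1) n, (l₂.getD j 0 : ℤ) * a j := by
      apply Finset.sum_congr rfl
      intro q hq
      rw [Finset.mem_Ico] at hq
      rw [heq q (by omega) hq.2]
    have hlow1 : ∑ j ∈ Finset.range (p+1), (l₁.getD j 0 : ℤ) * a j ≤ a (p : ℤ) - 1 := by
      rw [Finset.sum_range_succ, hd1p]
      have := sum_le hk ha0 harec l₁ (getD_le h₁.2.1) h₁.2.2.2 p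
      simpa using this
    have hlow2 : a (p : ℤ) ≤ ∑ j ∈ Finset.range (p+1), (l₂.getD j 0 : ℤ) * a j :=
      sum_ge hk ha0 harec l₂ p hd2p (p+1) (by omega)
    have e1 : sval a l₁ = ∑ j ∈ Finset.range n, (l₁.getD j 0 : ℤ) * a j := rfl
    have e2 : sval a l₂ = ∑ j ∈ Finset.range n, (l₂.getD j 0 : ℤ) * a j := by
      rw [sval, ← hlen]
    rw [e1, e2, split l₁, split l₂, hupper]
    linarith


omit hk ha0 harec in
lemma rep_getD (n j : ℕ) : (List.replicate n (0:ℕ)).getD j 0 = 0 := by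
  rcases Nat.lt_or_ge j n with h | h
  · rw [List.getD_eq_getElem _ 0 (by simpa using h)]
    simp
  · exact List.getD_eq_default _ _ (by simpa using h)

lemma good_append (l' : List ℕ) (m : ℕ) (hm : 1 ≤ m)
    (hlen : l'.length + k ≤ m ∨ l' = [])
    (hd : ∀ x ∈ l', x ≤ 1) (hs : Sep k l') :
    Good k (l' ++ List.replicate (m - 1 - l'.length) 0 ++ [1]) ∧
    sval a (l' ++ List.replicate (m - 1 - l'.length) 0 ++ [1])
      = sval a l' + a ((m : ℤ) - 1) := by
  obtain ⟨m', rfl⟩ : ∃ m', m = m' + 1 := ⟨m - 1, by omega⟩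
  have hll : l'.length ≤ m' := by
    rcases hlen with h | h
    · omega
    · simp [h]
  set z := List.replicate (m' + 1 - 1 - l'.length) (0:ℕ) with hz
  set L := l' ++ z ++ [1] with hL
  have hzlen : z.length = m' - l'.length := by simp [hz]
  have hLlen : L.length = m' + 1 := by
    simp only [hL, List.length_append, List.length_cons, List.length_nil, hzlen]
    omega
  have gd1 : ∀ i, i < l'.length → L.getD i 0 = l'.getD i 0 := by
    intro i hi
    rw [hL, List.getD_append _ _ _ _ (by simp [hzlen]; omega),
      List.getD_append _ _ _ _ hi]
  have gd2 : ∀ i, l'.length ≤ i → i < m' → L.getD i 0 = 0 := by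
    intro i h1 h2
    rw [hL, List.getD_append _ _ _ _ (by simp [hzlen]; omega),
      List.getD_append_right _ _ _ _ h1]
    exact rep_getD _ _
  have gd3 : L.getD m' 0 = 1 := by
    rw [hL, List.getD_append_right _ _ _ _ (by simp [hzlen]; omega)]
    have : m' - (l' ++ z).length = 0 := by simp [hzlen]; omega
    rw [this]
    rfl
  have hgood : Good k L := by
    refine ⟨by simp [hL], ?_, ?_, ?_⟩
    · intro x hx
      simp only [hL, List.mem_append, List.mem_singleton, hz, List.mem_replicate] at hx
      rcases hx with (hx | hx) | hx
      · exact hd x hx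
      · omega
      · omega
    · rw [hL, List.getLast?_concat]
      simp
    · intro i j hij hdi hdj
      have hjL : j < m' + 1 := by
        by_contra hc
        rw [List.getD_eq_default _ _ (by omega)] at hdj
        omega
      have hiL : i < m' + 1 := by omega
      have hil : i < l'.length ∨ i = m' := by
        rcases Nat.lt_or_ge i l'.length with h | h
        · exact Or.inl h
        · right
          by_contra hc
          rw [gd2 i h (by omega)] at hdi
          omega
      have hjl : j < l'.length ∨ j = m' := by
        rcases Nat.lt_or_ge j l'.length with h | h
        · exact Or.inl h
        · right
          by_contra hc
          rw [gd2 j h (by omega)] at hdj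
          omega
      rcases hil with hi' | hi'
      · rcases hjl with hj' | hj'
        · exact hs i j hij (by rw [← gd1 i hi']; exact hdi) (by rw [← gd1 j hj']; exact hdj)
        · rcases hlen with h | h
          · omega
          · rw [h] at hi'; simp at hi'
      · omega
  refine ⟨hgood, ?_⟩
  have e0 : sval a L = ∑ i ∈ Finset.range (m' + 1), (L.getD i 0 : ℤ) * a i := by
    rw [sval, hLlen]
  rw [e0, Finset.sum_range_succ, gd3]
  have hcons := Finset.sum_Ico_consecutive (fun j => ((L.getD j 0 : ℤ)) * a j)
    (Nat.zero_le l'.length) hll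
  simp only [← Finset.range_eq_Ico] at hcons
  have hz0 : ∑ j ∈ Finset.Ico l'.length m', (L.getD j 0 : ℤ) * a j = 0 := by
    apply Finset.sum_eq_zero
    intro i hi
    rw [Finset.mem_Ico] at hi
    rw [gd2 i hi.1 hi.2]
    simp
  have hlow : ∑ j ∈ Finset.range l'.length, (L.getD j 0 : ℤ) * a j = sval a l' := by
    apply Finset.sum_congr rfl
    intro i hi
    rw [Finset.mem_range] at hi
    rw [gd1 i hi]
  rw [hz0, hlow] at hcons
  have hc : ((m' : ℤ) + 1 - 1) = (m' : ℤ) := by ring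
  push_cast
  rw [hc, ← hcons]
  ring

lemma surj : ∀ n : ℕ, 1 ≤ n → ∃ l : List ℕ, Good k l ∧ sval a l = n := by
  intro n
  induction n using Nat.strong_induction_on with
  | _ n ih =>
  intro hn
  classical
  have hex : ∃ m : ℕ, (n : ℤ) < a m := ⟨n, by have := a_unbounded hk ha0 harec n; omega⟩
  set m := Nat.find hex with hm
  have hspec : (n : ℤ) < a m := Nat.find_spec hex
  have hm1 : 1 ≤ m := by
    by_contra hc
    have : m = 0 := by omega
    rw [this] at hspec
    simp only [Nat.cast_zero] at hspec
    rw [ha0 0 le_rfl] at hspec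
    omega
  have hmin : a ((m - 1 : ℕ) : ℤ) ≤ n := by
    have := Nat.find_min hex (show m - 1 < m by omega)
    omega
  have hrec : a (m : ℤ) = a ((m : ℤ) - 1) + a ((m : ℤ) - k) := harec m (by exact_mod_cast hm1)
  have hcast : ((m - 1 : ℕ) : ℤ) = (m : ℤ) - 1 := by push_cast; omega
  rw [hcast] at hmin
  have hr : (n : ℤ) - a ((m : ℤ) - 1) < a ((m : ℤ) - k) := by omega
  rcases eq_or_lt_of_le hmin with he | hlt
  · -- n = a (m-1), use l' = []
    obtain ⟨hg, hv⟩ := good_append hk ha0 harec [] m hm1 (Or.inr rfl) (by simp)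
      (by intro i j _ h1 _; simp [List.getD] at h1)
    refine ⟨_, hg, ?_⟩
    rw [hv]
    simp [sval, he]
  · have hpos : 1 ≤ (n : ℤ) - a ((m : ℤ) - 1) := by omega
    have hkm : k < m := by
      by_contra hc
      rw [ha0 ((m : ℤ) - k) (by push_cast; omega)] at hr
      omega
    set r := ((n : ℤ) - a ((m : ℤ) - 1)).toNat with hrdef
    have hrc : (r : ℤ) = (n : ℤ) - a ((m : ℤ) - 1) := Int.toNat_of_nonneg (by omega)
    have hrn : r < n := by
      have := a_pos hk ha0 harec ((m : ℤ) - 1)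
      omega
    obtain ⟨l', hg', hv'⟩ := ih r hrn (by omega)
    have hlen' : l'.length + k ≤ m := by
      by_contra hc
      have h1 : (m : ℤ) - k ≤ (l'.length : ℤ) - 1 := by push_cast at hc ⊢; omega
      have h2 := a_mono hk ha0 harec ((m : ℤ) - k) ((l'.length : ℤ) - 1)
        (by push_cast; omega) h1
      have h3 := sval_ge hk ha0 harec hg'
      omega
    obtain ⟨hg, hv⟩ := good_append hk ha0 harec l' m hm1 (Or.inl hlen') hg'.2.1 hg'.2.2.2
    refine ⟨_, hg, ?_⟩
    rw [hv, hv', hrc]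
    ring


lemma card_pred {l : List ℕ} (hl : Good k l) :
    {l' : List ℕ | Good k l' ∧ ZOrd l' l}.ncard = (sval a l - 1).toNat := by
  set S := {l' : List ℕ | Good k l' ∧ ZOrd l' l} with hS
  have himg : sval a '' S = ↑(Finset.Ico (1:ℤ) (sval a l)) := by
    ext n
    simp only [Set.mem_image, Finset.coe_Ico, Set.mem_Ico, hS, Set.mem_setOf_eq]
    constructor
    · rintro ⟨l', ⟨hg, hz⟩, rfl⟩
      exact ⟨sval_pos hk ha0 harec hg, sval_lt hk ha0 harec hg hl hz⟩
    · rintro ⟨h1, h2⟩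
      obtain ⟨l', hg, hv⟩ := surj hk ha0 harec n.toNat (by omega)
      rw [Int.toNat_of_nonneg (by omega)] at hv
      refine ⟨l', ⟨hg, ?_⟩, hv⟩
      rcases zord_tri l' l with h | h | h
      · exact h
      · subst h; omega
      · have := sval_lt hk ha0 harec hl hg h; omega
  have hinj : Set.InjOn (sval a) S := by
    intro x hx y hy hxy
    rcases zord_tri x y with h | h | h
    · have := sval_lt hk ha0 harec hx.1 hy.1 h; omega
    · exact h
    · have := sval_lt hk ha0 harec hy.1 hx.1 h; omega
  have hni := Set.ncard_image_of_injOn hinj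
  rw [himg, Set.ncard_coe_finset, Int.card_Ico] at hni
  exact hni.symm

end

section
variable {k : ℕ} {lam : ℕ → ℕ} (hk : 1 < k)
  (hlam1 : lam 1 = 1) (hlamk : lam k = 1)
  (hlam0 : ∀ i, i ≠ 1 → i ≠ k → lam i = 0)

include hk hlam1 hlamk hlam0

lemma Lam_k : Lam lam k = 2 := by
  rw [Lam, Finset.sum_eq_add_of_mem 1 k
    (Finset.mem_Icc.2 ⟨le_rfl, by omega⟩) (Finset.mem_Icc.2 ⟨by omega, le_rfl⟩)
    (by omega) (fun c _ hc => hlam0 c hc.1 hc.2)]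
  omega

lemma Lam_lt {j : ℕ} (h1 : 1 ≤ j) (h2 : j < k) : Lam lam j = 1 := by
  rw [Lam, Finset.sum_eq_single 1
    (fun b hb hb1 => hlam0 b hb1 (by rw [Finset.mem_Icc] at hb; omega))
    (fun h => absurd (Finset.mem_Icc.2 ⟨le_rfl, h1⟩) h)]
  exact hlam1

omit hk hlam1 hlamk hlam0 in
lemma Lam_zero : Lam lam 0 = 0 := by simp [Lam]

lemma mu_zero : mu lam 0 = 1 := by
  have h1 : 1 ∈ {j : ℕ | 0 < Lam lam j} := by
    simp only [Set.mem_setOf_eq, Lam_lt hk hlam1 hlamk hlam0 le_rfl hk]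
    omega
  have hmem := Nat.sInf_mem (⟨1, h1⟩ : Set.Nonempty {j : ℕ | 0 < Lam lam j})
  have hle := Nat.sInf_le h1
  rw [mu]
  rcases Nat.lt_or_ge (sInf {j : ℕ | 0 < Lam lam j}) 1 with h | h
  · exfalso
    have h0 : sInf {j : ℕ | 0 < Lam lam j} = 0 := by omega
    rw [h0] at hmem
    simp [Lam_zero] at hmem
  · omega

lemma mu_one : mu lam 1 = k := by
  have h1 : k ∈ {j : ℕ | 1 < Lam lam j} := by
    simp only [Set.mem_setOf_eq, Lam_k hk hlam1 hlamk hlam0]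
    omega
  have hmem := Nat.sInf_mem (⟨k, h1⟩ : Set.Nonempty {j : ℕ | 1 < Lam lam j})
  have hle := Nat.sInf_le h1
  rw [mu]
  simp only [Set.mem_setOf_eq] at hmem
  rcases Nat.lt_or_ge (sInf {j : ℕ | 1 < Lam lam j}) k with h | h
  · exfalso
    rcases Nat.eq_zero_or_pos (sInf {j : ℕ | 1 < Lam lam j}) with h0 | h0
    · rw [h0, Lam_zero] at hmem; omega
    · rw [Lam_lt hk hlam1 hlamk hlam0 h0 h] at hmem; omega
  · omega

omit hk hlam1 hlamk hlam0 in
lemma getD_ne_len {l : List ℕ} {j : ℕ} (h : l.getD j 0 ≠ 0) : j < l.length := by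
  by_contra hc
  rw [List.getD_eq_default _ _ (by omega)] at h
  exact h rfl

lemma valid_iff (l : List ℕ) : AValid lam k l ↔ Good k l := by
  constructor
  · rintro ⟨h1, h2, h3, h4⟩
    have hle : ∀ x ∈ l, x ≤ 1 := by
      intro x hx
      have := h2 x hx
      rw [Lam_k hk hlam1 hlamk hlam0] at this
      omega
    refine ⟨h1, hle, h3, ?_⟩
    intro i j hij hdi hdj
    by_contra hc
    have hmu : j < i + mu lam (l.getD i 0) := by
      rw [hdi, mu_one hk hlam1 hlamk hlam0]; omega
    have := h4 i j hij hmu (getD_ne_len (by omega))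
    omega
  · rintro ⟨h1, h2, h3, h4⟩
    refine ⟨h1, ?_, h3, ?_⟩
    · intro x hx
      rw [Lam_k hk hlam1 hlamk hlam0]
      have := h2 x hx
      omega
    · intro i j hij hmu hjlen
      have hdle : l.getD i 0 ≤ 1 := getD_le h2 i
      rcases Nat.eq_zero_or_pos (l.getD i 0) with h0 | h0
      · rw [h0, mu_zero hk hlam1 hlamk hlam0] at hmu
        omega
      · have hdi : l.getD i 0 = 1 := by omega
        rw [hdi, mu_one hk hlam1 hlamk hlam0] at hmu
        by_contra hc
        have hdj : l.getD j 0 = 1 := by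
          have := getD_le h2 j
          omega
        have := h4 i j hij hdi hdj
        omega

end
end S15

/-- if `k > 1` and `Λ = 2` (so `λ₁ = λ_k = 1`, i.e. the
recurrence is `a_n = a_{n-1} + a_{n-k}`), then the `a`-Zeckendorf system is a
place value system with place values `a_0, a_1, …`: if `d_M, …, d_0` is the
`a`-Zeckendorf representation of `N` (the `N`-th valid sequence), then
`N = ∑ d_i a_i`, every digit is `0` or `1`, and any two `1`-digits are
separated by at least `k - 1` zeroes. -/
theorem stmt15 (k : ℕ) (lam : ℕ → ℕ) (hk : 1 < k)
    (hlam1 : lam 1 = 1) (hlamk : lam k = 1)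
    (hlam0 : ∀ i, i ≠ 1 → i ≠ k → lam i = 0)
    (a : ℤ → ℤ)
    (ha0 : ∀ i : ℤ, i ≤ 0 → a i = 1)
    (harec : ∀ n : ℤ, 1 ≤ n → a n = a (n - 1) + a (n - k)) :
    ∀ N : ℕ, 1 ≤ N → ∀ l : List ℕ, AValid lam k l →
      Set.ncard {l' : List ℕ | AValid lam k l' ∧ ZOrd l' l} = N - 1 →
      ((N : ℤ) = ∑ i ∈ Finset.range l.length, (l.getD i 0 : ℤ) * a i) ∧
      (∀ x ∈ l, x ≤ 1) ∧
      (∀ i j : ℕ, i < j → j < l.length →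
        l.getD i 0 = 1 → l.getD j 0 = 1 → i + k ≤ j) := by
  intro N hN l hval hcard
  have hGood : S15.Good k l := (S15.valid_iff hk hlam1 hlamk hlam0 l).1 hval
  have hsets : {l' : List ℕ | AValid lam k l' ∧ ZOrd l' l}
      = {l' : List ℕ | S15.Good k l' ∧ ZOrd l' l} := by
    ext l'
    simp only [Set.mem_setOf_eq, S15.valid_iff hk hlam1 hlamk hlam0]
  rw [hsets, S15.card_pred hk ha0 harec hGood] at hcard
  have hpos := S15.sval_pos hk ha0 harec hGood
  have hval' : (N : ℤ) = S15.sval a l := by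
    have h1 : ((S15.sval a l - 1).toNat : ℤ) = S15.sval a l - 1 :=
      Int.toNat_of_nonneg (by omega)
    omega
  exact ⟨hval', hGood.2.1, fun i j hij _ h1 h2 => hGood.2.2.2 i j hij h1 h2⟩
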